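/- Let k > 0, ρ > 0, C_f ≥ 0, let A₀ : ℝ → ℝ be differentiable with A₀ > 0, and let A, Q : ℝ → ℝ be differentiable stationary solutions with A > 0, i.e. Q′(x) = 0 and d/dx(Q(x)²/A(x) + (k/(3ρ√π)) A(x)^{3/2}) = (A(x)/(ρ√π)) · d/dx(k√A₀(x)) − C_f Q(x)/A(x) for all x. Then, with b = k/(ρ√π), the function E(x) = Q(x)²/(2A(x)²) + b√A(x) − b√A₀(x) satisfies E′(x) = −C_f Q(x)/A(x)² for all x. -/

import Mathlib

open Real

/-- For stationary solutions of the constant-stiffness blood flow system, the Bernoulli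
quantity `E = Q²/(2A²) + b√A − b√A₀` satisfies `E' = −C_f Q/A²`, with `b = k/(ρ√π)`. -/
theorem blood_flow_stationary_energy_dissipation
    (k ρ C_f : ℝ) (hk : 0 < k) (hρ : 0 < ρ) (hCf : 0 ≤ C_f)
    (A₀ A Q : ℝ → ℝ)
    (hA₀ : Differentiable ℝ A₀) (hA₀pos : ∀ x, 0 < A₀ x)
    (hA : Differentiable ℝ A) (hQ : Differentiable ℝ Q)
    (hApos : ∀ x, 0 < A x)
    (hQconst : ∀ x, deriv Q x = 0)
    (hmom : ∀ x, deriv (fun y => Q y ^ 2 / A y +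
        k / (3 * ρ * Real.sqrt π) * A y ^ (3 / 2 : ℝ)) x =
        A x / (ρ * Real.sqrt π) * deriv (fun y => k * Real.sqrt (A₀ y)) x
          - C_f * Q x / A x) :
    ∀ x, deriv (fun y => Q y ^ 2 / (2 * A y ^ 2) +
        k / (ρ * Real.sqrt π) * Real.sqrt (A y)
          - k / (ρ * Real.sqrt π) * Real.sqrt (A₀ y)) x
      = -(C_f * Q x / A x ^ 2) := by
  intro x
  have hAx : 0 < A x := hApos x
  have hA₀x : 0 < A₀ x := hA₀pos x
  have hQder : HasDerivAt Q 0 x := by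
    have := (hQ x).hasDerivAt
    rwa [hQconst x] at this
  have hAder : HasDerivAt A (deriv A x) x := (hA x).hasDerivAt
  have hA₀der : HasDerivAt A₀ (deriv A₀ x) x := (hA₀ x).hasDerivAt
  set a' := deriv A x
  set a0' := deriv A₀ x
  have hsπ : 0 < Real.sqrt π := Real.sqrt_pos.mpr Real.pi_pos
  -- derivative of k * sqrt A₀
  have hsqrtA₀ : HasDerivAt (fun y => Real.sqrt (A₀ y)) (a0' / (2 * Real.sqrt (A₀ x))) x :=
    hA₀der.sqrt hA₀x.ne'
  have hderA₀ : deriv (fun y => k * Real.sqrt (A₀ y)) x = k * (a0' / (2 * Real.sqrt (A₀ x))) :=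
    ((hsqrtA₀.const_mul k)).deriv
  -- derivative of LHS of momentum
  have hQ2 : HasDerivAt (fun y => Q y ^ 2) (2 * Q x * 0) x := by
    simpa using hQder.fun_pow 2
  have hdiv : HasDerivAt (fun y => Q y ^ 2 / A y)
      ((2 * Q x * 0 * A x - Q x ^ 2 * a') / A x ^ 2) x := hQ2.div hAder hAx.ne'
  have hrpow : HasDerivAt (fun y => A y ^ (3 / 2 : ℝ))
      (a' * (3 / 2) * A x ^ ((3 / 2 : ℝ) - 1)) x :=
    hAder.rpow_const (Or.inl hAx.ne')
  have hmomL : HasDerivAt (fun y => Q y ^ 2 / A y +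
      k / (3 * ρ * Real.sqrt π) * A y ^ (3 / 2 : ℝ))
      ((2 * Q x * 0 * A x - Q x ^ 2 * a') / A x ^ 2
        + k / (3 * ρ * Real.sqrt π) * (a' * (3 / 2) * A x ^ ((3 / 2 : ℝ) - 1))) x :=
    hdiv.add (hrpow.const_mul _)
  have hmomx := hmom x
  rw [hmomL.deriv, hderA₀] at hmomx
  -- derivative of target
  have hA2 : HasDerivAt (fun y => 2 * A y ^ 2) (2 * (2 * A x * a')) x := by
    have := (hAder.pow 2).const_mul (2:ℝ)
    simpa [mul_comm, mul_left_comm, mul_assoc] using this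
  have ht1 : HasDerivAt (fun y => Q y ^ 2 / (2 * A y ^ 2))
      ((2 * Q x * 0 * (2 * A x ^ 2) - Q x ^ 2 * (2 * (2 * A x * a'))) / (2 * A x ^ 2) ^ 2) x :=
    hQ2.div hA2 (by positivity)
  have hsqrtA : HasDerivAt (fun y => Real.sqrt (A y)) (a' / (2 * Real.sqrt (A x))) x :=
    hAder.sqrt hAx.ne'
  have htarget : HasDerivAt (fun y => Q y ^ 2 / (2 * A y ^ 2) +
      k / (ρ * Real.sqrt π) * Real.sqrt ((A y))
        - k / (ρ * Real.sqrt π) * Real.sqrt (A₀ y))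
      ((2 * Q x * 0 * (2 * A x ^ 2) - Q x ^ 2 * (2 * (2 * A x * a'))) / (2 * A x ^ 2) ^ 2
        + k / (ρ * Real.sqrt π) * (a' / (2 * Real.sqrt (A x)))
        - k / (ρ * Real.sqrt π) * (a0' / (2 * Real.sqrt (A₀ x)))) x :=
    (ht1.add (hsqrtA.const_mul _)).sub (hsqrtA₀.const_mul _)
  rw [htarget.deriv]
  -- algebra
  set s := Real.sqrt (A x) with hs
  set s₀ := Real.sqrt (A₀ x) with hs₀
  have hspos : 0 < s := Real.sqrt_pos.mpr hAx
  have hs₀pos : 0 < s₀ := Real.sqrt_pos.mpr hA₀x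
  have hs2 : s ^ 2 = A x := Real.sq_sqrt hAx.le
  have hs₀2 : s₀ ^ 2 = A₀ x := Real.sq_sqrt hA₀x.le
  have hrw : A x ^ ((3 / 2 : ℝ) - 1) = s := by
    rw [show (3 / 2 : ℝ) - 1 = 1 / 2 by norm_num, hs, Real.sqrt_eq_rpow]
  rw [hrw] at hmomx
  rw [← hs2] at hmomx ⊢
  field_simp at hmomx ⊢
  linear_combination hmomx
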